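/- Let d ≥ 1, k ∈ ℕ, and let f : [0,1]^d → ℝ be continuous. For every multi-index a = (a₁,…,a_d) ∈ {0,1,…,2^k−1}^d, with I := a₁ 2^{−k} + a₂ 2^{−2k} + ⋯ + a_d 2^{−dk} + [0, 2^{−dk}] and C := 2^{−k} a + [0, 2^{−k}]^d, one has | ∫_C f(z) dz − ∫_I f(γ_k(σ)) dσ | ≤ 2^{−dk} · ω(f, √d / 2^k). -/

import Mathlib

open MeasureTheory Real Set Filter

noncomputable section

/-- The spherical parametrization `φ : ℝ^{n-1} → ℝⁿ` (angles given as `θ : ℕ → ℝ`;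
only the entries `θ 0, …, θ (n-2)` matter).  The first component is
`cos θ₀ ∏_{j=1}^{n-2} sin θ_j`, the second is `sin θ₀ ∏_{j=1}^{n-2} sin θ_j`, and for
`1 ≤ i ≤ n-2` the `(i+2)`-nd component (index `i+1`) is `cos θ_i ∏_{j=i+1}^{n-2} sin θ_j`. -/
def sphParam (n : ℕ) (θ : ℕ → ℝ) : EuclideanSpace ℝ (Fin n) := WithLp.toLp 2 fun m =>
  if (m : ℕ) = 0 then Real.cos (θ 0) * ∏ j ∈ Finset.Ico 1 (n - 1), Real.sin (θ j)
  else if (m : ℕ) = 1 then Real.sin (θ 0) * ∏ j ∈ Finset.Ico 1 (n - 1), Real.sin (θ j)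
  else Real.cos (θ ((m : ℕ) - 1)) * ∏ j ∈ Finset.Ico (m : ℕ) (n - 1), Real.sin (θ j)

/-- `g(θ) = ∏_{j=1}^{n-2} |sin θ_j|^j`, the square root of the Gram determinant of `φ`. -/
def gramG (n : ℕ) (θ : ℕ → ℝ) : ℝ := ∏ j ∈ Finset.Ico 1 (n - 1), |Real.sin (θ j)| ^ j

/-- The angle dither `θ_k(τ) = (τ, 2^{k-1} τ, 2^{2k-1} τ, …, 2^{(n-2)k-1} τ)`. -/
def ditherAngle (k : ℕ) (τ : ℝ) : ℕ → ℝ := fun j =>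
  if j = 0 then τ else 2 ^ (j * k - 1) * τ

/-- The dither signal `U_k = φ ∘ θ_k`. -/
def ditherU (n k : ℕ) (τ : ℝ) : EuclideanSpace ℝ (Fin n) := sphParam n (ditherAngle k τ)

/-- The dither signal `v_k(τ) = g(θ_k(τ)) U_k(τ)`. -/
def ditherV (n k : ℕ) (τ : ℝ) : EuclideanSpace ℝ (Fin n) :=
  gramG n (ditherAngle k τ) • ditherU n k τ

/-- The closed unit ball `𝔹` of `ℝⁿ`. -/
def unitBall (n : ℕ) : Set (EuclideanSpace ℝ (Fin n)) := Metric.closedBall 0 1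

/-- The volume `vol(𝔹)` of the closed unit ball. -/
def volB (n : ℕ) : ℝ := (volume (unitBall n)).toReal

/-- The averaged objective function `J̄_a(x) = (1/vol 𝔹) ∫_𝔹 J(x + aξ) dξ`. -/
def Jbar (n : ℕ) (J : EuclideanSpace ℝ (Fin n) → ℝ) (a : ℝ) (x : EuclideanSpace ℝ (Fin n)) : ℝ :=
  (volB n)⁻¹ * ∫ ξ in unitBall n, J (x + a • ξ)

/-- The surface measure `λ_{∂𝔹}` on the unit sphere of `ℝⁿ`. -/
def sphereMeasure (n : ℕ) : Measure (Metric.sphere (0 : EuclideanSpace ℝ (Fin n)) 1) :=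
  (volume : Measure (EuclideanSpace ℝ (Fin n))).toSphere

/-- The constant `c = vol(𝔹)/(2π^{n-1})`. -/
def cConst (n : ℕ) : ℝ := volB n / (2 * π ^ (n - 1))

/-- The averaged vector field `F̆_k(x) = (b/2π) ∫₀^{2π} J(x + a φ(θ_k τ)) g(θ_k τ) φ(θ_k τ) dτ`. -/
def Fbreve (n : ℕ) (J : EuclideanSpace ℝ (Fin n) → ℝ) (a b : ℝ) (k : ℕ)
    (x : EuclideanSpace ℝ (Fin n)) : EuclideanSpace ℝ (Fin n) :=
  (b / (2 * π)) • ∫ τ in (0:ℝ)..(2 * π),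
    (J (x + a • sphParam n (ditherAngle k τ)) * gramG n (ditherAngle k τ)) •
      sphParam n (ditherAngle k τ)

/-- The averaged map `Ĕ_k(η) = -(b/2π) η ∫₀^{2π} g(θ_k τ) φ(θ_k τ) dτ`. -/
def Ebreve (n : ℕ) (b : ℝ) (k : ℕ) (η : ℝ) : EuclideanSpace ℝ (Fin n) :=
  (-(b / (2 * π)) * η) •
    ∫ τ in (0:ℝ)..(2 * π), gramG n (ditherAngle k τ) • sphParam n (ditherAngle k τ)

/-- A (locally absolutely continuous) solution, in integral form, of the transformed
closed-loop system `x̃' = (J(x̃ + a U_k(ωt)) - η + d t)·b·v_k(ωt)`,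
`η' = -h η + h J(x̃ + a U_k(ωt)) + h d t` on the interval `I`. -/
def IsTransSol (n : ℕ) (J : EuclideanSpace ℝ (Fin n) → ℝ) (a b h ω : ℝ) (k : ℕ)
    (d : ℝ → ℝ) (I : Set ℝ) (x : ℝ → EuclideanSpace ℝ (Fin n)) (η : ℝ → ℝ) : Prop :=
  I.OrdConnected ∧ ContinuousOn x I ∧ ContinuousOn η I ∧
  ∀ t₀ ∈ I, ∀ t₁ ∈ I,
    IntervalIntegrable (fun s =>
      ((J (x s + a • ditherU n k (ω * s)) - η s + d s) * b) • ditherV n k (ω * s))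
      volume t₀ t₁ ∧
    IntervalIntegrable (fun s =>
      -h * η s + h * J (x s + a • ditherU n k (ω * s)) + h * d s) volume t₀ t₁ ∧
    x t₁ = x t₀ + ∫ s in t₀..t₁,
      ((J (x s + a • ditherU n k (ω * s)) - η s + d s) * b) • ditherV n k (ω * s) ∧
    η t₁ = η t₀ + ∫ s in t₀..t₁,
      (-h * η s + h * J (x s + a • ditherU n k (ω * s)) + h * d s)

/-- A (locally absolutely continuous) solution, in integral form, of the gradient system
`x̄' = κ ∇J̄_a(x̄) + f t` on the interval `I`. -/
def IsGradSol (n : ℕ) (J : EuclideanSpace ℝ (Fin n) → ℝ) (a κ : ℝ)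
    (f : ℝ → EuclideanSpace ℝ (Fin n)) (I : Set ℝ)
    (x : ℝ → EuclideanSpace ℝ (Fin n)) : Prop :=
  I.OrdConnected ∧ ContinuousOn x I ∧
  ∀ t₀ ∈ I, ∀ t₁ ∈ I,
    IntervalIntegrable (fun s => κ • gradient (Jbar n J a) (x s) + f s) volume t₀ t₁ ∧
    x t₁ = x t₀ + ∫ s in t₀..t₁, (κ • gradient (Jbar n J a) (x s) + f s)

/-- The unit cube `[0,1]^d`. -/
def cube (d : ℕ) : Set (EuclideanSpace ℝ (Fin d)) := {z | ∀ j, z j ∈ Icc (0:ℝ) 1}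

/-- The curve `γ_k(σ) = (saw σ, saw (2^k σ), …, saw (2^{(d-1)k} σ))`,
where `saw` is the sawtooth wave `σ ↦ σ - ⌊σ⌋`. -/
def gammaCurve (d k : ℕ) (σ : ℝ) : EuclideanSpace ℝ (Fin d) :=
  WithLp.toLp 2 fun j => Int.fract (2 ^ ((j : ℕ) * k) * σ)

/-- The modulus of continuity of `f` on `[0,1]^d` of order `ε`
(with respect to the Euclidean norm). -/
def modCont (d : ℕ) (f : EuclideanSpace ℝ (Fin d) → ℝ) (ε : ℝ) : ℝ :=
  sSup {r | ∃ z ∈ cube d, ∃ ζ ∈ cube d, ‖z - ζ‖ ≤ ε ∧ r = |f z - f ζ|}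

/-- Extension of a `d`-tuple to a function `ℕ → ℝ` (by zero). -/
def padTo (d : ℕ) (z : EuclideanSpace ℝ (Fin d)) : ℕ → ℝ :=
  fun j => if h : j < d then z ⟨j, h⟩ else 0

/-- The map `Θ(z) = π (2 z₀, z₁, …, z_{n-2})`. -/
def ThetaMap (z : ℕ → ℝ) : ℕ → ℝ := fun j => if j = 0 then 2 * π * z 0 else π * z j

/-- `W = (0,2π) × (0,π)^{n-2}`. -/
def Wset (n : ℕ) : Set (EuclideanSpace ℝ (Fin (n-1))) :=
  {θ | ∀ j : Fin (n-1), θ j ∈ Ioo 0 (if (j : ℕ) = 0 then 2 * π else π)}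

/-- `2W = (0,4π) × (0,2π)^{n-2}`. -/
def W2set (n : ℕ) : Set (EuclideanSpace ℝ (Fin (n-1))) :=
  {θ | ∀ j : Fin (n-1), θ j ∈ Ioo 0 (if (j : ℕ) = 0 then 4 * π else 2 * π)}

/-- A class-`𝒦` function: continuous and strictly increasing on `[0,∞)` with `γ 0 = 0`. -/
def IsClassK (γ : ℝ → ℝ) : Prop :=
  ContinuousOn γ (Ici 0) ∧ StrictMonoOn γ (Ici 0) ∧ γ 0 = 0

/-- A class-`𝒦∞` function. -/
def IsClassKInf (α : ℝ → ℝ) : Prop := IsClassK α ∧ Tendsto α atTop atTop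

/-- A class-`𝒦ℒ` function. -/
def IsClassKL (β : ℝ → ℝ → ℝ) : Prop :=
  (∀ t ≥ (0 : ℝ), IsClassK fun s => β s t) ∧
  ∀ s ≥ (0 : ℝ), AntitoneOn (β s) (Ici 0) ∧ Tendsto (β s) atTop (nhds 0)

/-- The `L∞` (essential supremum) norm of a function on `ℝ`. -/
def LinfNorm {F : Type*} [NormedAddCommGroup F] (d : ℝ → F) : ℝ :=
  (eLpNorm d ⊤ volume).toReal

/-- `d` is (a.e. strongly) measurable and essentially bounded with `‖d‖_∞ ≤ δ`. -/
def IsEssBdd {F : Type*} [NormedAddCommGroup F] (d : ℝ → F) (δ : ℝ) : Prop :=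
  AEStronglyMeasurable d volume ∧ eLpNorm d ⊤ volume ≤ ENNReal.ofReal δ

private lemma st7_sum_split (f : ℕ → ℝ) (m n : ℕ) :
    ∑ i ∈ Finset.range (m + n), f i
      = ∑ i ∈ Finset.range m, f i + ∑ i ∈ Finset.range n, f (m + i) := by
  induction n with
  | zero => simp
  | succ n ih =>
    rw [show m + (n + 1) = (m + n) + 1 by omega, Finset.sum_range_succ, ih,
      Finset.sum_range_succ, add_assoc]

private lemma st7_tail (k : ℕ) (A : ℕ → ℕ) (hA : ∀ i, (A i : ℝ) ≤ 2 ^ k - 1) :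
    ∀ (m t : ℕ), ∑ i ∈ Finset.range (m + 1), (A (t + i) : ℝ) / 2 ^ ((i + 1) * k)
      ≤ (A t : ℝ) / 2 ^ k + ((2:ℝ) ^ k)⁻¹ - ((2:ℝ) ^ ((m + 1) * k))⁻¹ := by
  intro m
  induction m with
  | zero =>
    intro t
    simp [one_mul]
  | succ m ih =>
    intro t
    rw [Finset.sum_range_succ']
    have hstep : ∀ i ∈ Finset.range (m + 1), (A (t + (i + 1)) : ℝ) / 2 ^ ((i + 1 + 1) * k)
        = ((2:ℝ) ^ k)⁻¹ * ((A ((t + 1) + i) : ℝ) / 2 ^ ((i + 1) * k)) := by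
      intro i _
      have h2 : (2:ℝ) ^ ((i + 1 + 1) * k) = 2 ^ k * 2 ^ ((i + 1) * k) := by
        rw [← pow_add]; congr 1; ring
      have h3 : t + (i + 1) = (t + 1) + i := by omega
      have hp : (0:ℝ) < 2 ^ k := by positivity
      have hq : (0:ℝ) < 2 ^ ((i + 1) * k) := by positivity
      rw [h2, h3]
      field_simp
    rw [Finset.sum_congr rfl hstep, ← Finset.mul_sum]
    have hS := ih (t + 1)
    have hAt1 := hA (t + 1)
    have hp : (0:ℝ) < 2 ^ k := by positivity
    have hq : (0:ℝ) < 2 ^ ((m + 1) * k) := by positivity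
    have hS2 : ∑ i ∈ Finset.range (m + 1), (A ((t + 1) + i) : ℝ) / 2 ^ ((i + 1) * k)
        ≤ 1 - ((2:ℝ) ^ ((m + 1) * k))⁻¹ := by
      have h1 : (A (t + 1) : ℝ) / 2 ^ k ≤ 1 - ((2:ℝ) ^ k)⁻¹ := by
        rw [div_le_iff₀ hp]; have : (0:ℝ) < 2 ^ k := hp
        field_simp
        linarith
      linarith
    have hmul : (2:ℝ) ^ ((m + 1 + 1) * k) = 2 ^ k * 2 ^ ((m + 1) * k) := by
      rw [← pow_add]; congr 1; ring
    have hkey : ((2:ℝ) ^ k)⁻¹ * ∑ i ∈ Finset.range (m + 1), (A ((t + 1) + i) : ℝ) / 2 ^ ((i + 1) * k)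
        ≤ ((2:ℝ) ^ k)⁻¹ - ((2:ℝ) ^ ((m + 1 + 1) * k))⁻¹ := by
      have := mul_le_mul_of_nonneg_left hS2 (by positivity : (0:ℝ) ≤ ((2:ℝ) ^ k)⁻¹)
      rw [hmul, mul_inv]
      rw [mul_sub, mul_one] at this
      exact this
    have hlast : (A (t + 0) : ℝ) / 2 ^ ((0 + 1) * k) = (A t : ℝ) / 2 ^ k := by norm_num
    rw [hlast]
    linarith

private lemma st7_key (d k : ℕ) (A : ℕ → ℕ) (hA : ∀ i, (A i : ℝ) ≤ 2 ^ k - 1)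
    (j : ℕ) (hj : j < d) :
    ∃ N : ℤ,
      (A j : ℝ) / 2 ^ k ≤ 2 ^ (j * k) * (∑ i ∈ Finset.range d, (A i : ℝ) / 2 ^ ((i + 1) * k)) - N ∧
      2 ^ (j * k) * (∑ i ∈ Finset.range d, (A i : ℝ) / 2 ^ ((i + 1) * k)) - N
        ≤ (A j : ℝ) / 2 ^ k + ((2:ℝ) ^ k)⁻¹ - 2 ^ (j * k) * ((2:ℝ) ^ (d * k))⁻¹ := by
  obtain ⟨m, hm⟩ : ∃ m, d = j + (m + 1) := ⟨d - j - 1, by omega⟩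
  have hdecomp : 2 ^ (j * k) * (∑ i ∈ Finset.range d, (A i : ℝ) / 2 ^ ((i + 1) * k))
        - ((∑ i ∈ Finset.range j, (A i : ℤ) * 2 ^ ((j - 1 - i) * k) : ℤ) : ℝ)
        = ∑ i ∈ Finset.range (m + 1), (A (j + i) : ℝ) / 2 ^ ((i + 1) * k) := by
      subst hm
      rw [st7_sum_split, mul_add]
      have h1 : 2 ^ (j * k) * ∑ i ∈ Finset.range j, (A i : ℝ) / 2 ^ ((i + 1) * k)
          = ((∑ i ∈ Finset.range j, (A i : ℤ) * 2 ^ ((j - 1 - i) * k) : ℤ) : ℝ) := by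
        push_cast
        rw [Finset.mul_sum]
        refine Finset.sum_congr rfl fun i hi => ?_
        have hij : i < j := Finset.mem_range.mp hi
        have he : (2:ℝ) ^ (j * k) = 2 ^ ((i + 1) * k) * 2 ^ ((j - 1 - i) * k) := by
          rw [← pow_add]; congr 1
          have : (i + 1) * k + (j - 1 - i) * k = ((i + 1) + (j - 1 - i)) * k := by ring
          rw [this]; congr 1; omega
        have hp : (0:ℝ) < 2 ^ ((i + 1) * k) := by positivity
        rw [he]
        field_simp
      have h2 : 2 ^ (j * k) * ∑ i ∈ Finset.range (m + 1), (A (j + i) : ℝ) / 2 ^ ((j + i + 1) * k)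
          = ∑ i ∈ Finset.range (m + 1), (A (j + i) : ℝ) / 2 ^ ((i + 1) * k) := by
        rw [Finset.mul_sum]
        refine Finset.sum_congr rfl fun i _ => ?_
        have he : (2:ℝ) ^ ((j + i + 1) * k) = 2 ^ (j * k) * 2 ^ ((i + 1) * k) := by
          rw [← pow_add]; congr 1; ring
        have hp : (0:ℝ) < 2 ^ ((i + 1) * k) := by positivity
        have hp2 : (0:ℝ) < 2 ^ (j * k) := by positivity
        rw [he]
        field_simp
      rw [h1, h2]
      ring
  refine ⟨∑ i ∈ Finset.range j, (A i : ℤ) * 2 ^ ((j - 1 - i) * k), ?_, ?_⟩ <;> rw [hdecomp]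
  · -- lower bound
    have h0 : (A j : ℝ) / 2 ^ k = (A (j + 0) : ℝ) / 2 ^ ((0 + 1) * k) := by norm_num
    rw [h0]
    exact Finset.single_le_sum (f := fun i => (A (j + i) : ℝ) / 2 ^ ((i + 1) * k))
      (fun i _ => by positivity) (Finset.mem_range.mpr (Nat.succ_pos m))
  · -- upper bound
    have := st7_tail k A hA m j
    have heq : 2 ^ (j * k) * ((2:ℝ) ^ (d * k))⁻¹ = ((2:ℝ) ^ ((m + 1) * k))⁻¹ := by
      have he : (2:ℝ) ^ (d * k) = 2 ^ (j * k) * 2 ^ ((m + 1) * k) := by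
        rw [← pow_add]; congr 1; subst hm; ring
      rw [he, mul_inv]
      have hp : (0:ℝ) < 2 ^ (j * k) := by positivity
      field_simp
    rw [heq]
    exact this

private lemma st7_compact (d : ℕ) (lo hi : Fin d → ℝ) :
    IsCompact {z : EuclideanSpace ℝ (Fin d) | ∀ j, z j ∈ Icc (lo j) (hi j)} := by
  have heq : {z : EuclideanSpace ℝ (Fin d) | ∀ j, z j ∈ Icc (lo j) (hi j)}
      = (PiLp.continuousLinearEquiv 2 ℝ (fun _ : Fin d => ℝ)).toHomeomorph ⁻¹'
        (Set.pi Set.univ fun j => Icc (lo j) (hi j)) := by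
    ext z
    simp only [Set.mem_preimage, Set.mem_pi, Set.mem_univ, true_implies, mem_setOf_eq]
    exact Iff.rfl
  rw [heq, Homeomorph.isCompact_preimage]
  exact isCompact_univ_pi fun j => isCompact_Icc

private lemma st7_vol (d : ℕ) (lo : Fin d → ℝ) (c : ℝ) (hc : 0 ≤ c) :
    volume {z : EuclideanSpace ℝ (Fin d) | ∀ j, z j ∈ Icc (lo j) (lo j + c)}
      = ENNReal.ofReal (c ^ d) := by
  have heq : {z : EuclideanSpace ℝ (Fin d) | ∀ j, z j ∈ Icc (lo j) (lo j + c)}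
      = (MeasurableEquiv.toLp 2 (Fin d → ℝ)).symm ⁻¹'
        (Set.pi Set.univ fun j => Icc (lo j) (lo j + c)) := by
    ext z
    simp only [Set.mem_preimage, Set.mem_pi, Set.mem_univ, true_implies, mem_setOf_eq]
    exact Iff.rfl
  rw [heq, (EuclideanSpace.volume_preserving_symm_measurableEquiv_toLp (Fin d)).measure_preimage
    ((MeasurableSet.univ_pi fun j => measurableSet_Icc).nullMeasurableSet)]
  rw [volume_pi_pi]
  simp [Real.volume_Icc, Finset.prod_const, ← ENNReal.ofReal_pow hc]

private lemma st7_meas (d : ℕ) (lo hi : Fin d → ℝ) :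
    MeasurableSet {z : EuclideanSpace ℝ (Fin d) | ∀ j, z j ∈ Icc (lo j) (hi j)} :=
  (st7_compact d lo hi).isClosed.measurableSet


/-- on each subcube/subinterval pair, the two integrals differ by at most
`2^{-dk} ω(f, √d/2^k)`. -/
theorem statement7 (d : ℕ) (hd : 1 ≤ d) (k : ℕ) (hk : 1 ≤ k)
    (f : EuclideanSpace ℝ (Fin d) → ℝ) (hf : ContinuousOn f (cube d))
    (a : Fin d → ℕ) (ha : ∀ m, a m < 2 ^ k) :
    |(∫ z in {z : EuclideanSpace ℝ (Fin d) | ∀ j : Fin d,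
          z j ∈ Icc ((a j : ℝ) / 2 ^ k) ((a j : ℝ) / 2 ^ k + ((2:ℝ) ^ k)⁻¹)}, f z) -
        ∫ σ in (∑ j : Fin d, (a j : ℝ) / 2 ^ (((j : ℕ) + 1) * k))..
          ((∑ j : Fin d, (a j : ℝ) / 2 ^ (((j : ℕ) + 1) * k)) + ((2:ℝ) ^ (d * k))⁻¹),
          f (gammaCurve d k σ)| ≤
      ((2:ℝ) ^ (d * k))⁻¹ * modCont d f (Real.sqrt d / 2 ^ k) := by
  set A : ℕ → ℕ := fun i => if h : i < d then a ⟨i, h⟩ else 0 with hA_def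
  have hAa : ∀ j : Fin d, A (j : ℕ) = a j := by
    intro j
    simp only [hA_def]
    rw [dif_pos j.isLt, Fin.eta]
  have hA : ∀ i, (A i : ℝ) ≤ 2 ^ k - 1 := by
    intro i
    by_cases h : i < d
    · have h1 : A i < 2 ^ k := by
        simp only [hA_def]; rw [dif_pos h]; exact ha ⟨i, h⟩
      have h2 : (A i : ℝ) + 1 ≤ 2 ^ k := by exact_mod_cast h1
      linarith
    · simp only [hA_def]; rw [dif_neg h]
      have : (0:ℝ) ≤ 2 ^ k - 1 := by
        have : (1:ℝ) ≤ 2 ^ k := one_le_pow₀ (by norm_num)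
        linarith
      simpa using this
  set s₀ : ℝ := ∑ j : Fin d, (a j : ℝ) / 2 ^ (((j : ℕ) + 1) * k) with hs₀_def
  have hs₀ : s₀ = ∑ i ∈ Finset.range d, (A i : ℝ) / 2 ^ ((i + 1) * k) := by
    rw [hs₀_def, ← Fin.sum_univ_eq_sum_range (fun i => (A i : ℝ) / 2 ^ ((i + 1) * k)) d]
    exact Finset.sum_congr rfl fun j _ => by rw [hAa]
  set V : ℝ := ((2:ℝ) ^ (d * k))⁻¹ with hV_def
  have hV0 : 0 < V := by rw [hV_def]; positivity
  have key : ∀ j : Fin d, ∃ N : ℤ,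
      (a j : ℝ) / 2 ^ k ≤ 2 ^ ((j:ℕ) * k) * s₀ - N ∧
      2 ^ ((j:ℕ) * k) * s₀ - N ≤ (a j : ℝ) / 2 ^ k + ((2:ℝ) ^ k)⁻¹ - 2 ^ ((j:ℕ) * k) * V := by
    intro j
    obtain ⟨N, h1, h2⟩ := st7_key d k A hA (j : ℕ) j.isLt
    rw [← hs₀, hAa j] at h1 h2
    exact ⟨N, h1, h2⟩
  choose N hN1 hN2 using key
  set C : Set (EuclideanSpace ℝ (Fin d)) := {z : EuclideanSpace ℝ (Fin d) | ∀ j : Fin d,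
      z j ∈ Icc ((a j : ℝ) / 2 ^ k) ((a j : ℝ) / 2 ^ k + ((2:ℝ) ^ k)⁻¹)} with hC_def
  set L : ℝ → EuclideanSpace ℝ (Fin d) :=
    fun σ => WithLp.toLp 2 (fun j : Fin d => 2 ^ ((j:ℕ) * k) * σ - (N j : ℝ)) with hL_def
  have hpow_pos : ∀ j : Fin d, (0:ℝ) < 2 ^ ((j:ℕ) * k) := fun j => by positivity
  have hL_mem' : ∀ σ ∈ Icc s₀ (s₀ + V), ∀ j : Fin d,
      (2 ^ ((j:ℕ) * k) * σ - (N j : ℝ))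
        ∈ Icc ((a j : ℝ) / 2 ^ k) ((a j : ℝ) / 2 ^ k + ((2:ℝ) ^ k)⁻¹) := by
    intro σ hσ j
    constructor
    · have h := mul_le_mul_of_nonneg_left hσ.1 (hpow_pos j).le
      have h1 := hN1 j
      linarith
    · have h := mul_le_mul_of_nonneg_left hσ.2 (hpow_pos j).le
      have h2 := hN2 j
      rw [mul_add] at h
      linarith
  have hL_mem : ∀ σ ∈ Icc s₀ (s₀ + V), L σ ∈ C := by
    intro σ hσ
    rw [hC_def]
    intro j
    exact hL_mem' σ hσ j
  have hone : ∀ j : Fin d, (a j : ℝ) / 2 ^ k + ((2:ℝ) ^ k)⁻¹ ≤ 1 := by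
    intro j
    have hp : (0:ℝ) < 2 ^ k := by positivity
    have h1 : (a j : ℝ) + 1 ≤ 2 ^ k := by
      have h2 : (a j + 1 : ℕ) ≤ 2 ^ k := ha j
      exact_mod_cast h2
    have he : (a j : ℝ) / 2 ^ k + ((2:ℝ) ^ k)⁻¹ = ((a j : ℝ) + 1) / 2 ^ k := by
      field_simp
    rw [he, div_le_one hp]
    exact h1
  have hγL : ∀ σ ∈ Ico s₀ (s₀ + V), gammaCurve d k σ = L σ := by
    intro σ hσ
    have hσ' : σ ∈ Icc s₀ (s₀ + V) := ⟨hσ.1, hσ.2.le⟩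
    ext j
    have ha0 : (0:ℝ) ≤ (a j : ℝ) / 2 ^ k := by positivity
    have hfl : ⌊(2:ℝ) ^ ((j:ℕ) * k) * σ⌋ = N j := by
      rw [Int.floor_eq_iff]
      constructor
      · have := (hL_mem' σ hσ' j).1
        linarith
      · have h := mul_lt_mul_of_pos_left hσ.2 (hpow_pos j)
        have h2 := hN2 j
        have h3 := hone j
        rw [mul_add] at h
        push_cast
        linarith
    show Int.fract ((2:ℝ) ^ ((j:ℕ) * k) * σ) = L σ j
    rw [← Int.self_sub_floor, hfl, hL_def]
  have hCcube : C ⊆ cube d := by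
    intro z hz
    rw [hC_def] at hz
    intro j
    have h := hz j
    have h1 := hone j
    have ha0 : (0:ℝ) ≤ (a j : ℝ) / 2 ^ k := by positivity
    exact ⟨le_trans ha0 h.1, le_trans h.2 h1⟩
  have hCcompact : IsCompact C := by
    rw [hC_def]
    exact st7_compact d (fun j => (a j : ℝ) / 2 ^ k)
      (fun j => (a j : ℝ) / 2 ^ k + ((2:ℝ) ^ k)⁻¹)
  have hCne : C.Nonempty := by
    refine ⟨(WithLp.toLp 2 (fun j => (a j : ℝ) / 2 ^ k) : EuclideanSpace ℝ (Fin d)), ?_⟩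
    rw [hC_def]
    exact fun j => ⟨le_rfl, le_add_of_nonneg_right (by positivity)⟩
  obtain ⟨zM, hzM, hmax⟩ := hCcompact.exists_isMaxOn hCne (hf.mono hCcube)
  obtain ⟨zm, hzm, hmin⟩ := hCcompact.exists_isMinOn hCne (hf.mono hCcube)
  have hcube_compact : IsCompact (cube d) := by
    have heq : cube d = {z : EuclideanSpace ℝ (Fin d) | ∀ j, z j ∈
        Icc ((fun _ : Fin d => (0:ℝ)) j) ((fun _ : Fin d => (1:ℝ)) j)} := rfl
    rw [heq]
    exact st7_compact d _ _
  obtain ⟨B, hB⟩ := hcube_compact.exists_bound_of_continuousOn hf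
  have hBdd : BddAbove {r | ∃ z ∈ cube d, ∃ ζ ∈ cube d,
      ‖z - ζ‖ ≤ Real.sqrt d / 2 ^ k ∧ r = |f z - f ζ|} := by
    refine ⟨2 * B, ?_⟩
    rintro r ⟨z, hz, ζ, hζ, -, rfl⟩
    have h1 := hB z hz
    have h2 := hB ζ hζ
    rw [Real.norm_eq_abs] at h1 h2
    calc |f z - f ζ| ≤ |f z| + |f ζ| := abs_sub _ _
    _ ≤ 2 * B := by linarith
  have hdist : ‖zM - zm‖ ≤ Real.sqrt d / 2 ^ k := by
    rw [EuclideanSpace.norm_eq]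
    have hterm : ∀ j : Fin d, ‖(zM - zm) j‖ ^ 2 ≤ (((2:ℝ) ^ k)⁻¹) ^ 2 := by
      intro j
      rw [hC_def] at hzM hzm
      have h1 := hzM j
      have h2 := hzm j
      have hsub : (zM - zm) j = zM j - zm j := rfl
      rw [hsub, Real.norm_eq_abs]
      have habs : |zM j - zm j| ≤ ((2:ℝ) ^ k)⁻¹ := by
        rw [abs_sub_le_iff]
        constructor
        · linarith [h1.1, h1.2, h2.1, h2.2]
        · linarith [h1.1, h1.2, h2.1, h2.2]
      exact pow_le_pow_left₀ (abs_nonneg _) habs 2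
    calc Real.sqrt (∑ j, ‖(zM - zm) j‖ ^ 2)
        ≤ Real.sqrt (∑ _j : Fin d, (((2:ℝ) ^ k)⁻¹) ^ 2) :=
          Real.sqrt_le_sqrt (Finset.sum_le_sum fun j _ => hterm j)
    _ = Real.sqrt d / 2 ^ k := by
        rw [Finset.sum_const, Finset.card_univ, Fintype.card_fin, nsmul_eq_mul,
          Real.sqrt_mul (by positivity), Real.sqrt_sq (by positivity), div_eq_mul_inv]
  have hmod : f zM - f zm ≤ modCont d f (Real.sqrt d / 2 ^ k) := by
    have hmem : |f zM - f zm| ∈ {r | ∃ z ∈ cube d, ∃ ζ ∈ cube d,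
        ‖z - ζ‖ ≤ Real.sqrt d / 2 ^ k ∧ r = |f z - f ζ|} :=
      ⟨zM, hCcube hzM, zm, hCcube hzm, hdist, rfl⟩
    exact le_trans (le_abs_self _) (le_csSup hBdd hmem)
  have hvol : volume C = ENNReal.ofReal ((((2:ℝ) ^ k)⁻¹) ^ d) := by
    rw [hC_def]
    exact st7_vol d (fun j => (a j : ℝ) / 2 ^ k) (((2:ℝ) ^ k)⁻¹) (by positivity)
  have hvolV : (volume C).toReal = V := by
    rw [hvol, ENNReal.toReal_ofReal (by positivity), hV_def, inv_pow, ← pow_mul, mul_comm k d]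
  have hfC : IntegrableOn f C := (hf.mono hCcube).integrableOn_compact hCcompact
  have hCmeas : MeasurableSet C := by
    rw [hC_def]
    exact st7_meas d _ _
  have hconst_int : ∀ c : ℝ, IntegrableOn (fun _ => c) C := fun c =>
    integrableOn_const (by rw [hvol]; exact ENNReal.ofReal_ne_top)
  have hCup : ∫ z in C, f z ≤ V * f zM := by
    have h := setIntegral_mono_on hfC (hconst_int (f zM)) hCmeas (fun z hz => hmax hz)
    rwa [setIntegral_const, measureReal_def, hvolV, smul_eq_mul] at h
  have hClo : V * f zm ≤ ∫ z in C, f z := by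
    have h := setIntegral_mono_on (hconst_int (f zm)) hfC hCmeas (fun z hz => hmin hz)
    rwa [setIntegral_const, measureReal_def, hvolV, smul_eq_mul] at h
  have hIle : s₀ ≤ s₀ + V := le_add_of_nonneg_right hV0.le
  have hLcont : Continuous L := by
    have hg : Continuous fun σ : ℝ => (fun j : Fin d => 2 ^ ((j:ℕ) * k) * σ - (N j : ℝ)) :=
      continuous_pi fun j => by fun_prop
    exact ((PiLp.continuousLinearEquiv 2 ℝ (fun _ : Fin d => ℝ)).symm.continuous).comp hg
  have hfL_cont : ContinuousOn (fun σ => f (L σ)) (Icc s₀ (s₀ + V)) :=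
    hf.comp hLcont.continuousOn (fun σ hσ => hCcube (hL_mem σ hσ))
  have hfL_int : IntervalIntegrable (fun σ => f (L σ)) volume s₀ (s₀ + V) :=
    ContinuousOn.intervalIntegrable (by rw [uIcc_of_le hIle]; exact hfL_cont)
  have hIeq : (∫ σ in s₀..(s₀ + V), f (gammaCurve d k σ))
      = ∫ σ in s₀..(s₀ + V), f (L σ) := by
    apply intervalIntegral.integral_congr_ae
    rw [MeasureTheory.ae_iff]
    refine measure_mono_null (fun σ hσ => ?_) (Real.volume_singleton (a := s₀ + V))
    simp only [mem_setOf_eq, Classical.not_imp] at hσ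
    obtain ⟨hσ1, hσ2⟩ := hσ
    rw [uIoc_of_le hIle] at hσ1
    by_contra hne
    rw [mem_singleton_iff] at hne
    have hico : σ ∈ Ico s₀ (s₀ + V) := ⟨hσ1.1.le, lt_of_le_of_ne hσ1.2 hne⟩
    exact hσ2 (by rw [hγL σ hico])
  have hIup : (∫ σ in s₀..(s₀ + V), f (L σ)) ≤ V * f zM := by
    have h := intervalIntegral.integral_mono_on hIle hfL_int intervalIntegrable_const
      (fun σ hσ => hmax (hL_mem σ hσ))
    rwa [intervalIntegral.integral_const, smul_eq_mul, add_sub_cancel_left] at h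
  have hIlo : V * f zm ≤ ∫ σ in s₀..(s₀ + V), f (L σ) := by
    have h := intervalIntegral.integral_mono_on hIle intervalIntegrable_const hfL_int
      (fun σ hσ => hmin (hL_mem σ hσ))
    rwa [intervalIntegral.integral_const, smul_eq_mul, add_sub_cancel_left] at h
  rw [hIeq, abs_le]
  have hm := mul_le_mul_of_nonneg_left hmod hV0.le
  constructor
  · nlinarith [hm, hClo, hIup]
  · nlinarith [hm, hCup, hIlo]
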